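/- arXiv:2504.10987 — 6 statements merged into one kernel-verified Lean document; each statement's English description precedes it below -/
import Mathlib

section
/- For every σ > 0, all μ₁, μ₂ ∈ ℝ, and every α ∈ (1,∞), the Rényi divergence of order α between the Gaussian measures N(μ₁, σ²) and N(μ₂, σ²) on ℝ equals α·(μ₁ − μ₂)²/(2σ²). -/
open MeasureTheory Real ProbabilityTheory
open scoped NNReal ENNReal

/-- Rényi divergence of order `α` between measures `P` and `Q` (with `P ≪ Q`):
`D_α(P‖Q) = (α−1)⁻¹ · log ∫ (dP/dQ)^α dQ`. -/
noncomputable def renyiDiv {Ω : Type*} [MeasurableSpace Ω] (α : ℝ) (P Q : Measure Ω) : ℝ :=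
  (α - 1)⁻¹ * Real.log (∫ x, ((P.rnDeriv Q) x).toReal ^ α ∂Q)

lemma exp_rpow_aux (t α : ℝ) : rexp t ^ α = rexp (α * t) := by
  rw [Real.rpow_def_of_pos (Real.exp_pos t), Real.log_exp, mul_comm]

lemma gaussian_pdf_key (σ μ₁ μ₂ α x : ℝ) (hσ : 0 < σ) :
    gaussianPDFReal μ₂ ⟨σ ^ 2, sq_nonneg σ⟩ x *
      ((gaussianPDFReal μ₂ ⟨σ ^ 2, sq_nonneg σ⟩ x)⁻¹ *
        gaussianPDFReal μ₁ ⟨σ ^ 2, sq_nonneg σ⟩ x) ^ α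
    = rexp (α * (α - 1) * (μ₁ - μ₂) ^ 2 / (2 * σ ^ 2)) *
      gaussianPDFReal (α * μ₁ + (1 - α) * μ₂) ⟨σ ^ 2, sq_nonneg σ⟩ x := by
  have hσ2 : (0:ℝ) < σ ^ 2 := by positivity
  have hc : ∀ h, NNReal.toReal (@Subtype.mk ℝ (fun r => 0 ≤ r) (σ ^ 2) h) = σ ^ 2 := fun _ => rfl
  simp only [gaussianPDFReal, NNReal.coe_mk, hc]
  have hN : (0:ℝ) < (√(2 * π * σ ^ 2))⁻¹ := by
    have : (0:ℝ) < 2 * π * σ ^ 2 := by positivity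
    positivity
  set N : ℝ := (√(2 * π * σ ^ 2))⁻¹ with hNdef
  have h1 : (N * rexp (-(x - μ₂) ^ 2 / (2 * σ ^ 2)))⁻¹ *
      (N * rexp (-(x - μ₁) ^ 2 / (2 * σ ^ 2)))
      = rexp (-(x - μ₁) ^ 2 / (2 * σ ^ 2) - -(x - μ₂) ^ 2 / (2 * σ ^ 2)) := by
    rw [Real.exp_sub]
    field_simp
  rw [h1, exp_rpow_aux, mul_assoc, ← Real.exp_add,
    mul_comm (rexp (α * (α - 1) * (μ₁ - μ₂) ^ 2 / (2 * σ ^ 2))), mul_assoc, ← Real.exp_add]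
  congr 1
  field_simp
  ring

/-- The Rényi divergence of order `α ∈ (1,∞)` between `N(μ₁, σ²)` and `N(μ₂, σ²)`
equals `α·(μ₁ − μ₂)²/(2σ²)`. -/
theorem renyiDiv_gaussian (σ μ₁ μ₂ : ℝ) (hσ : 0 < σ) (α : ℝ) (hα : 1 < α) :
    renyiDiv α (gaussianReal μ₁ ⟨σ ^ 2, sq_nonneg σ⟩) (gaussianReal μ₂ ⟨σ ^ 2, sq_nonneg σ⟩)
      = α * (μ₁ - μ₂) ^ 2 / (2 * σ ^ 2) := by
  have hσ2 : (0:ℝ) < σ ^ 2 := by positivity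
  set v : ℝ≥0 := ⟨σ ^ 2, sq_nonneg σ⟩ with hvdef
  have hv : v ≠ 0 := by
    intro h
    have : (v : ℝ) = 0 := by rw [h]; simp
    rw [hvdef] at this
    change σ ^ 2 = 0 at this
    exact hσ2.ne' this
  set P := gaussianReal μ₁ v with hPdef
  set Q := gaussianReal μ₂ v with hQdef
  have hQ : Q = volume.withDensity (gaussianPDF μ₂ v) := gaussianReal_of_var_ne_zero _ hv
  have hq_pos : ∀ x, 0 < gaussianPDFReal μ₂ v x := fun x => gaussianPDFReal_pos _ _ _ hv
  have hp_pos : ∀ x, 0 < gaussianPDFReal μ₁ v x := fun x => gaussianPDFReal_pos _ _ _ hv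
  -- identify the Radon-Nikodym derivative
  have h1 : P.rnDeriv Q =ᵐ[volume]
      fun x => (gaussianPDF μ₂ v x)⁻¹ * P.rnDeriv volume x := by
    rw [hQ]
    exact Measure.rnDeriv_withDensity_right P volume
      (measurable_gaussianPDF μ₂ v).aemeasurable
      (ae_of_all _ fun x => (gaussianPDF_pos _ hv x).ne')
      (ae_of_all _ fun x => ENNReal.ofReal_ne_top)
  have h2 : P.rnDeriv volume =ᵐ[volume] gaussianPDF μ₁ v := rnDeriv_gaussianReal μ₁ v
  have h3 : P.rnDeriv Q =ᵐ[volume]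
      fun x => (gaussianPDF μ₂ v x)⁻¹ * gaussianPDF μ₁ v x := by
    filter_upwards [h1, h2] with x hx1 hx2
    rw [hx1, hx2]
  have h3' : P.rnDeriv Q =ᵐ[Q]
      fun x => (gaussianPDF μ₂ v x)⁻¹ * gaussianPDF μ₁ v x :=
    (gaussianReal_absolutelyContinuous μ₂ hv).ae_eq h3
  have h4 : (fun x => (P.rnDeriv Q x).toReal ^ α) =ᵐ[Q]
      fun x => ((gaussianPDFReal μ₂ v x)⁻¹ * gaussianPDFReal μ₁ v x) ^ α := by
    filter_upwards [h3'] with x hx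
    rw [hx]
    congr 1
    rw [ENNReal.toReal_mul, ENNReal.toReal_inv]
    simp only [gaussianPDF]
    rw [ENNReal.toReal_ofReal (hq_pos x).le, ENNReal.toReal_ofReal (hp_pos x).le]
  -- compute the integral
  have hint : ∫ x, (P.rnDeriv Q x).toReal ^ α ∂Q
      = rexp (α * (α - 1) * (μ₁ - μ₂) ^ 2 / (2 * σ ^ 2)) := by
    rw [integral_congr_ae h4, hQ]
    have hd : gaussianPDF μ₂ v
        = fun x => ((Real.toNNReal (gaussianPDFReal μ₂ v x) : ℝ≥0) : ℝ≥0∞) := rfl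
    rw [hd, integral_withDensity_eq_integral_smul
      ((measurable_gaussianPDFReal μ₂ v).real_toNNReal) _]
    have hpt : (fun x => Real.toNNReal (gaussianPDFReal μ₂ v x) •
          (((gaussianPDFReal μ₂ v x)⁻¹ * gaussianPDFReal μ₁ v x) ^ α))
        = fun x => rexp (α * (α - 1) * (μ₁ - μ₂) ^ 2 / (2 * σ ^ 2)) *
            gaussianPDFReal (α * μ₁ + (1 - α) * μ₂) v x := by
      funext x
      rw [NNReal.smul_def, smul_eq_mul, Real.coe_toNNReal _ (hq_pos x).le]
      exact gaussian_pdf_key σ μ₁ μ₂ α x hσ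
    rw [hpt, integral_const_mul, integral_gaussianPDFReal_eq_one _ hv, mul_one]
  rw [renyiDiv, hint, Real.log_exp]
  have hα1 : α - 1 ≠ 0 := sub_ne_zero.mpr hα.ne'
  field_simp
end

section
/- Let σ > 0 and let a, b ∈ ℝ satisfy |a − b| ≤ 1. Then for every α ∈ (1,∞), the Rényi divergence of order α between the Gaussian measures N(a, σ²) and N(b, σ²) on ℝ is at most α/(2σ²). Hence the Gaussian mechanism, which releases q(D) + N(0, σ²) noise for a sensitivity-1 query q, satisfies (1/(2σ²))-zCDP. -/
open MeasureTheory Real ProbabilityTheory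
open scoped ENNReal NNReal

/-- Gaussian mechanism is `(1/(2σ²))`-zCDP: if `|a − b| ≤ 1` then for every `α ∈ (1,∞)`,
`D_α(N(a,σ²)‖N(b,σ²)) ≤ α/(2σ²)`. -/
theorem gaussian_mechanism_zcdp (σ a b : ℝ) (hσ : 0 < σ) (hab : |a - b| ≤ 1)
    (α : ℝ) (hα : 1 < α) :
    renyiDiv α (gaussianReal a ⟨σ ^ 2, sq_nonneg σ⟩) (gaussianReal b ⟨σ ^ 2, sq_nonneg σ⟩)
      ≤ α / (2 * σ ^ 2) := by
  set v : NNReal := ⟨σ ^ 2, sq_nonneg σ⟩ with hv_def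
  have hσ2 : (0:ℝ) < σ ^ 2 := by positivity
  have hv : v ≠ 0 := by
    intro h
    have : (v : ℝ) = 0 := by rw [h]; simp
    simp only [hv_def, NNReal.coe_mk] at this
    linarith [show σ ^ 2 = 0 from this]
  have hvr : (v : ℝ) = σ ^ 2 := rfl
  set m : ℝ := α * a + (1 - α) * b with hm_def
  set K : ℝ := α * (α - 1) * (a - b) ^ 2 / (2 * σ ^ 2) with hK_def
  set c : ℝ := (Real.sqrt (2 * π * (v:ℝ)))⁻¹ with hc_def
  have hc_pos : 0 < c := by
    rw [hc_def]
    have : (0:ℝ) < 2 * π * (v:ℝ) := by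
      rw [hvr]; positivity
    positivity
  -- pdf positivity
  have hpdf_pos : ∀ (μ : ℝ) (x : ℝ), 0 < gaussianPDFReal μ v x :=
    fun μ x => gaussianPDFReal_pos μ v x hv
  -- density of P wrt Q
  set f : ℝ → ℝ≥0∞ := fun x =>
    ENNReal.ofReal (gaussianPDFReal a v x / gaussianPDFReal b v x) with hf_def
  have hf_meas : Measurable f :=
    ((measurable_gaussianPDFReal a v).div (measurable_gaussianPDFReal b v)).ennreal_ofReal
  have hP : gaussianReal a v = (gaussianReal b v).withDensity f := by
    rw [gaussianReal_of_var_ne_zero a hv, gaussianReal_of_var_ne_zero b hv,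
      ← withDensity_mul _ (measurable_gaussianPDF b v) hf_meas]
    congr 1
    ext x
    simp only [Pi.mul_apply, gaussianPDF, hf_def]
    rw [← ENNReal.ofReal_mul (gaussianPDFReal_nonneg b v x)]
    congr 1
    rw [mul_comm, div_mul_cancel₀ _ (hpdf_pos b x).ne']
  have hrn : (gaussianReal a v).rnDeriv (gaussianReal b v) =ᵐ[gaussianReal b v] f := by
    rw [hP]
    exact Measure.rnDeriv_withDensity _ hf_meas
  have h_int_congr :
      ∫ x, (((gaussianReal a v).rnDeriv (gaussianReal b v)) x).toReal ^ α ∂(gaussianReal b v)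
        = ∫ x, gaussianPDFReal b v x *
            (gaussianPDFReal a v x / gaussianPDFReal b v x) ^ α := by
    rw [integral_congr_ae (hrn.mono fun x hx => by rw [hx])]
    have h1 : ∀ x, (f x).toReal ^ α
        = (gaussianPDFReal a v x / gaussianPDFReal b v x) ^ α := by
      intro x
      rw [hf_def]
      rw [ENNReal.toReal_ofReal
        (div_nonneg (gaussianPDFReal_nonneg a v x) (gaussianPDFReal_nonneg b v x))]
    simp_rw [h1]
    rw [gaussianReal_of_var_ne_zero b hv]
    have : (gaussianPDF b v) = fun x => ((gaussianPDFReal b v x).toNNReal : ℝ≥0∞) := by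
      ext x; rfl
    rw [this, integral_withDensity_eq_integral_smul
      ((measurable_gaussianPDFReal b v).real_toNNReal) _]
    congr 1
    ext x
    rw [NNReal.smul_def, smul_eq_mul, Real.coe_toNNReal _ (gaussianPDFReal_nonneg b v x)]
  -- pointwise identity
  have h_pt : ∀ x, gaussianPDFReal b v x *
      (gaussianPDFReal a v x / gaussianPDFReal b v x) ^ α
        = Real.exp K * gaussianPDFReal m v x := by
    intro x
    simp only [gaussianPDFReal, ← hc_def]
    have hratio : c * rexp (-(x - a) ^ 2 / (2 * (v:ℝ))) /
        (c * rexp (-(x - b) ^ 2 / (2 * (v:ℝ))))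
        = rexp (-(x - a) ^ 2 / (2 * (v:ℝ)) - -(x - b) ^ 2 / (2 * (v:ℝ))) := by
      rw [mul_div_mul_left _ _ hc_pos.ne', Real.exp_sub]
    rw [hratio, Real.rpow_def_of_pos (Real.exp_pos _), Real.log_exp]
    have hexp : -(x - b) ^ 2 / (2 * (v:ℝ)) +
        (-(x - a) ^ 2 / (2 * (v:ℝ)) - -(x - b) ^ 2 / (2 * (v:ℝ))) * α
        = K + -(x - m) ^ 2 / (2 * (v:ℝ)) := by
      rw [hK_def, hm_def, hvr]
      field_simp
      ring
    calc c * rexp (-(x - b) ^ 2 / (2 * (v:ℝ))) *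
          rexp ((-(x - a) ^ 2 / (2 * (v:ℝ)) - -(x - b) ^ 2 / (2 * (v:ℝ))) * α)
        = c * rexp (-(x - b) ^ 2 / (2 * (v:ℝ)) +
            (-(x - a) ^ 2 / (2 * (v:ℝ)) - -(x - b) ^ 2 / (2 * (v:ℝ))) * α) := by
          rw [mul_assoc, ← Real.exp_add]
      _ = rexp K * (c * rexp (-(x - m) ^ 2 / (2 * (v:ℝ)))) := by
          rw [hexp, Real.exp_add]; ring
  have h_int : ∫ x, gaussianPDFReal b v x *
      (gaussianPDFReal a v x / gaussianPDFReal b v x) ^ α = Real.exp K := by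
    simp_rw [h_pt]
    rw [integral_const_mul, integral_gaussianPDFReal_eq_one m hv, mul_one]
  have hα1 : α - 1 ≠ 0 := by linarith
  have hsq : (a - b) ^ 2 ≤ 1 := by
    rw [← sq_abs]
    exact pow_le_one₀ (abs_nonneg _) hab
  rw [renyiDiv, h_int_congr, h_int, Real.log_exp, hK_def]
  rw [div_eq_mul_inv, ← mul_assoc]
  have : (α - 1)⁻¹ * (α * (α - 1) * (a - b) ^ 2) = α * (a - b) ^ 2 := by
    field_simp
  rw [this, div_eq_mul_inv]
  have h2 : (0:ℝ) ≤ (2 * σ ^ 2)⁻¹ := by positivity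
  nlinarith [mul_nonneg (mul_nonneg (by linarith : (0:ℝ) ≤ α) h2)
    (by linarith : (0:ℝ) ≤ 1 - (a - b) ^ 2)]
end

section
/- Let C be a finite nonempty set, let ε ≥ 0, Δ > 0, and let s₁, s₂ : C → ℝ satisfy |s₁(c) − s₂(c)| ≤ Δ for every c ∈ C. Define probability mass functions P_i(c) = exp(ε·s_i(c)/(2Δ)) / Σ_{c′∈C} exp(ε·s_i(c′)/(2Δ)) for i = 1, 2. Then P₁(c) ≤ e^ε · P₂(c) for every c ∈ C. Hence the exponential mechanism with score function of sensitivity Δ satisfies ε-DP. -/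
open Real Finset

/-- The exponential mechanism with sensitivity-`Δ` score function satisfies `ε`-DP:
the output probability mass functions on neighboring score functions `s₁, s₂`
satisfy `P₁(c) ≤ e^ε · P₂(c)` for every candidate `c`. -/
theorem exponential_mechanism_dp {C : Type*} [Fintype C] [Nonempty C]
    (ε Δ : ℝ) (hε : 0 ≤ ε) (hΔ : 0 < Δ)
    (s₁ s₂ : C → ℝ) (hs : ∀ c, |s₁ c - s₂ c| ≤ Δ) :
    ∀ c : C,
      Real.exp (ε * s₁ c / (2 * Δ)) / (∑ c' : C, Real.exp (ε * s₁ c' / (2 * Δ)))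
        ≤ Real.exp ε *
          (Real.exp (ε * s₂ c / (2 * Δ)) / (∑ c' : C, Real.exp (ε * s₂ c' / (2 * Δ)))) := by
  intro c
  have key : ∀ x y : ℝ, |x - y| ≤ Δ →
      Real.exp (ε * x / (2 * Δ)) ≤ Real.exp (ε / 2) * Real.exp (ε * y / (2 * Δ)) := by
    intro x y hxy
    rw [← Real.exp_add]
    apply Real.exp_le_exp.mpr
    have h1 : x - y ≤ Δ := (abs_le.mp hxy).2
    have hq : ε * (x - y) / (2 * Δ) ≤ ε * Δ / (2 * Δ) := by
      gcongr
    have he : ε * Δ / (2 * Δ) = ε / 2 := by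
      field_simp
    calc ε * x / (2 * Δ) = ε * y / (2 * Δ) + ε * (x - y) / (2 * Δ) := by ring
      _ ≤ ε * y / (2 * Δ) + ε / 2 := by rw [← he]; linarith
      _ = ε / 2 + ε * y / (2 * Δ) := by ring
  have hA : 0 < ∑ c' : C, Real.exp (ε * s₁ c' / (2 * Δ)) :=
    Finset.sum_pos (fun i _ => Real.exp_pos _) Finset.univ_nonempty
  have hB : 0 < ∑ c' : C, Real.exp (ε * s₂ c' / (2 * Δ)) :=
    Finset.sum_pos (fun i _ => Real.exp_pos _) Finset.univ_nonempty
  rw [div_le_iff₀ hA, mul_comm (Real.exp ε), mul_assoc, div_mul_eq_mul_div,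
    le_div_iff₀ hB]
  have h1 : Real.exp (ε * s₁ c / (2 * Δ)) ≤ Real.exp (ε / 2) * Real.exp (ε * s₂ c / (2 * Δ)) :=
    key _ _ (hs c)
  have h2 : ∑ c' : C, Real.exp (ε * s₂ c' / (2 * Δ))
      ≤ Real.exp (ε / 2) * ∑ c' : C, Real.exp (ε * s₁ c' / (2 * Δ)) := by
    rw [Finset.mul_sum]
    exact Finset.sum_le_sum fun i _ => key _ _ (by rw [abs_sub_comm]; exact hs i)
  calc Real.exp (ε * s₁ c / (2 * Δ)) * ∑ c' : C, Real.exp (ε * s₂ c' / (2 * Δ))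
      ≤ (Real.exp (ε / 2) * Real.exp (ε * s₂ c / (2 * Δ))) *
        (Real.exp (ε / 2) * ∑ c' : C, Real.exp (ε * s₁ c' / (2 * Δ))) := by
        apply mul_le_mul h1 h2 hB.le (by positivity)
    _ = (Real.exp (ε / 2) * Real.exp (ε / 2)) *
        (Real.exp (ε * s₂ c / (2 * Δ)) * ∑ c' : C, Real.exp (ε * s₁ c' / (2 * Δ))) := by ring
    _ = Real.exp ε *
        (Real.exp (ε * s₂ c / (2 * Δ)) * ∑ c' : C, Real.exp (ε * s₁ c' / (2 * Δ))) := by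
        rw [← Real.exp_add, add_halves]
    _ = Real.exp (ε * s₂ c / (2 * Δ)) *
        (Real.exp ε * ∑ c' : C, Real.exp (ε * s₁ c' / (2 * Δ))) := by ring
end

section
/- Let C be a finite nonempty set, let ε ≥ 0, Δ > 0, and let s₁, s₂ : C → ℝ satisfy |s₁(c) − s₂(c)| ≤ Δ for every c ∈ C. Define probability mass functions P_i(c) = exp(ε·s_i(c)/(2Δ)) / Σ_{c′∈C} exp(ε·s_i(c′)/(2Δ)) for i = 1, 2. Then for all c, c′ ∈ C, (P₁(c)/P₂(c)) / (P₁(c′)/P₂(c′)) ≤ e^ε; equivalently, the log-likelihood ratios log(P₁(c)/P₂(c)) all lie in a single interval of length ε. That is, the exponential mechanism has ε-bounded range. -/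
open Real Finset

/-- The exponential mechanism has `ε`-bounded range: for the output probability mass
functions `P₁, P₂` on neighboring score functions `s₁, s₂` of sensitivity `Δ`, the
ratios of likelihood ratios satisfy `(P₁(c)/P₂(c)) / (P₁(c')/P₂(c')) ≤ e^ε`. -/
theorem exponential_mechanism_bounded_range {C : Type*} [Fintype C] [Nonempty C]
    (ε Δ : ℝ) (hε : 0 ≤ ε) (hΔ : 0 < Δ)
    (s₁ s₂ : C → ℝ) (hs : ∀ c, |s₁ c - s₂ c| ≤ Δ) :
    ∀ c c' : C,
      ((Real.exp (ε * s₁ c / (2 * Δ)) / (∑ x : C, Real.exp (ε * s₁ x / (2 * Δ)))) /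
        (Real.exp (ε * s₂ c / (2 * Δ)) / (∑ x : C, Real.exp (ε * s₂ x / (2 * Δ))))) /
      ((Real.exp (ε * s₁ c' / (2 * Δ)) / (∑ x : C, Real.exp (ε * s₁ x / (2 * Δ)))) /
        (Real.exp (ε * s₂ c' / (2 * Δ)) / (∑ x : C, Real.exp (ε * s₂ x / (2 * Δ)))))
      ≤ Real.exp ε := by
  intro c c'
  have hS₁ : (0 : ℝ) < ∑ x : C, Real.exp (ε * s₁ x / (2 * Δ)) :=
    Finset.sum_pos (fun x _ => Real.exp_pos _) Finset.univ_nonempty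
  have hS₂ : (0 : ℝ) < ∑ x : C, Real.exp (ε * s₂ x / (2 * Δ)) :=
    Finset.sum_pos (fun x _ => Real.exp_pos _) Finset.univ_nonempty
  have hkey : ((Real.exp (ε * s₁ c / (2 * Δ)) / (∑ x : C, Real.exp (ε * s₁ x / (2 * Δ)))) /
        (Real.exp (ε * s₂ c / (2 * Δ)) / (∑ x : C, Real.exp (ε * s₂ x / (2 * Δ))))) /
      ((Real.exp (ε * s₁ c' / (2 * Δ)) / (∑ x : C, Real.exp (ε * s₁ x / (2 * Δ)))) /
        (Real.exp (ε * s₂ c' / (2 * Δ)) / (∑ x : C, Real.exp (ε * s₂ x / (2 * Δ)))))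
      = Real.exp (ε * s₁ c / (2 * Δ) - ε * s₂ c / (2 * Δ)
          - (ε * s₁ c' / (2 * Δ) - ε * s₂ c' / (2 * Δ))) := by
    rw [Real.exp_sub, Real.exp_sub, Real.exp_sub]
    field_simp
  rw [hkey, Real.exp_le_exp]
  have h1 := (abs_le.mp (hs c)).2
  have h2 := (abs_le.mp (hs c')).1
  have : ε * s₁ c / (2 * Δ) - ε * s₂ c / (2 * Δ)
      - (ε * s₁ c' / (2 * Δ) - ε * s₂ c' / (2 * Δ))
      = ε * ((s₁ c - s₂ c) - (s₁ c' - s₂ c')) / (2 * Δ) := by ring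
  rw [this]
  rw [div_le_iff₀ (by linarith)]
  nlinarith [mul_le_mul_of_nonneg_left h1 hε, mul_le_mul_of_nonneg_left (neg_le_neg h2) hε]
end

section
/- Let C be a finite nonempty set and let P, Q be probability mass functions on C with Q(c) > 0 and P(c) > 0 for all c ∈ C. Suppose there exist ε ≥ 0 and t ∈ ℝ such that t ≤ log(P(c)/Q(c)) ≤ t + ε for every c ∈ C. Then for every α ∈ (1,∞), (1/(α−1)) · log( Σ_{c∈C} Q(c) · (P(c)/Q(c))^α ) ≤ α·ε²/8. Hence an ε-bounded-range mechanism, in particular the exponential mechanism with privacy parameter ε, satisfies (ε²/8)-zCDP. -/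
open Real Finset


lemma key_exp_bound {p : ℝ} (hp0 : 0 ≤ p) (hp1 : p ≤ 1) (h : ℝ) :
    1 - p + p * Real.exp h ≤ Real.exp (p * h + h ^ 2 / 8) := by
  set D : ℝ → ℝ := fun x => 1 - p + p * Real.exp x with hDdef
  have hD : ∀ x, 0 < D x := by
    intro x
    rcases eq_or_lt_of_le hp0 with h0 | h0
    · simp [hDdef, ← h0]
    · have : 0 < p * Real.exp x := mul_pos h0 (Real.exp_pos x)
      simp only [hDdef]; linarith
  set f : ℝ → ℝ := fun x => p * x + x ^ 2 / 8 - Real.log (D x) with hfdef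
  set g : ℝ → ℝ := fun x => p + x / 4 - p * Real.exp x / D x with hgdef
  have hD' : ∀ x, HasDerivAt D (p * Real.exp x) x := by
    intro x
    exact (((Real.hasDerivAt_exp x).const_mul p).const_add (1 - p))
  have hf : ∀ x, HasDerivAt f (g x) x := by
    intro x
    have h1 : HasDerivAt (fun x : ℝ => p * x) p x := by
      simpa using (hasDerivAt_id x).const_mul p
    have h2 : HasDerivAt (fun x : ℝ => x ^ 2 / 8) (x / 4) x := by
      have := (hasDerivAt_pow 2 x).div_const 8
      exact this.congr_deriv (by push_cast; ring)
    have h3 : HasDerivAt (fun x => Real.log (D x)) (p * Real.exp x / D x) x :=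
      (hD' x).log (hD x).ne'
    exact ((h1.add h2).sub h3)
  have hg : ∀ x, HasDerivAt g (1 / 4 - p * Real.exp x * (1 - p) / (D x) ^ 2) x := by
    intro x
    have h2 : HasDerivAt (fun x : ℝ => x / 4) (1 / 4) x := by
      simpa using (hasDerivAt_id x).div_const 4
    have h3 : HasDerivAt (fun x => p * Real.exp x / D x)
        ((p * Real.exp x * D x - p * Real.exp x * (p * Real.exp x)) / (D x) ^ 2) x :=
      ((Real.hasDerivAt_exp x).const_mul p).div (hD' x) (hD x).ne'
    have := ((hasDerivAt_const x p).add h2).sub h3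
    refine this.congr_deriv ?_
    have hDx := (hD x).ne'
    have hN : p * Real.exp x * D x - p * Real.exp x * (p * Real.exp x) = p * Real.exp x * (1 - p) := by
      rw [show D x = 1 - p + p * Real.exp x from rfl]; ring
    rw [hN]; ring
  have hg0 : ∀ x, 0 ≤ 1 / 4 - p * Real.exp x * (1 - p) / (D x) ^ 2 := by
    intro x
    rw [sub_nonneg, div_le_iff₀ (pow_pos (hD x) 2)]
    have : D x = 1 - p + p * Real.exp x := rfl
    nlinarith [sq_nonneg ((1 - p) - p * Real.exp x)]
  have hgmono : Monotone g := monotone_of_hasDerivAt_nonneg hg hg0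
  have hgzero : g 0 = 0 := by simp [hgdef, hDdef]
  have hf0 : f 0 = 0 := by simp [hfdef, hDdef]
  have key : 0 ≤ f h := by
    rcases le_or_gt 0 h with hh | hh
    · have mono : MonotoneOn f (Set.Ici 0) := by
        apply monotoneOn_of_hasDerivWithinAt_nonneg (convex_Ici 0)
          (fun x _ => (hf x).continuousAt.continuousWithinAt)
          (fun x _ => (hf x).hasDerivWithinAt)
        intro x hx
        rw [interior_Ici] at hx
        have := hgmono (le_of_lt hx)
        rw [hgzero] at this
        exact this
      have := mono (Set.self_mem_Ici) hh hh
      rwa [hf0] at this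
    · have anti : AntitoneOn f (Set.Iic 0) := by
        apply antitoneOn_of_hasDerivWithinAt_nonpos (convex_Iic 0)
          (fun x _ => (hf x).continuousAt.continuousWithinAt)
          (fun x _ => (hf x).hasDerivWithinAt)
        intro x hx
        rw [interior_Iic] at hx
        have := hgmono (le_of_lt hx)
        rwa [hgzero] at this
      have := anti hh.le (Set.self_mem_Iic) hh.le
      rwa [hf0] at this
  have : Real.log (D h) ≤ p * h + h ^ 2 / 8 := by
    simp only [hfdef] at key; linarith
  calc D h = Real.exp (Real.log (D h)) := (Real.exp_log (hD h)).symm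
    _ ≤ Real.exp (p * h + h ^ 2 / 8) := Real.exp_le_exp.mpr this

lemma finite_hoeffding {C : Type*} [Fintype C] [Nonempty C] (w x : C → ℝ)
    (hw : ∀ c, 0 ≤ w c) (hw1 : ∑ c, w c = 1) (a b l : ℝ)
    (hx : ∀ c, x c ∈ Set.Icc a b) :
    ∑ c, w c * Real.exp (l * x c) ≤
      Real.exp (l * (∑ c, w c * x c) + l ^ 2 * (b - a) ^ 2 / 8) := by
  have hab : a ≤ b := le_trans (hx (Classical.arbitrary C)).1 (hx (Classical.arbitrary C)).2
  set μ := ∑ c, w c * x c with hμ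
  have hμa : a ≤ μ := by
    calc a = ∑ c, w c * a := by rw [← Finset.sum_mul, hw1, one_mul]
    _ ≤ μ := Finset.sum_le_sum (fun c _ => mul_le_mul_of_nonneg_left (hx c).1 (hw c))
  have hμb : μ ≤ b := by
    calc μ ≤ ∑ c, w c * b := Finset.sum_le_sum (fun c _ => mul_le_mul_of_nonneg_left (hx c).2 (hw c))
    _ = b := by rw [← Finset.sum_mul, hw1, one_mul]
  rcases eq_or_lt_of_le hab with heq | hlt
  · have hxc : ∀ c, x c = a := fun c => le_antisymm (heq ▸ (hx c).2) (hx c).1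
    have : μ = a := le_antisymm (heq ▸ hμb) hμa
    simp only [hxc, ← heq, this, sub_self]
    rw [← Finset.sum_mul, hw1, one_mul]
    simp
  · have hba : (0:ℝ) < b - a := by linarith
    set p := (μ - a) / (b - a) with hp
    have hp0 : 0 ≤ p := div_nonneg (by linarith) hba.le
    have hp1 : p ≤ 1 := (div_le_one hba).mpr (by linarith)
    have pointwise : ∀ c, Real.exp (l * x c) ≤
        (b - x c) / (b - a) * Real.exp (l * a) + (x c - a) / (b - a) * Real.exp (l * b) := by
      intro c
      have hs : (0:ℝ) ≤ (b - x c) / (b - a) := div_nonneg (by linarith [(hx c).2]) hba.le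
      have ht : (0:ℝ) ≤ (x c - a) / (b - a) := div_nonneg (by linarith [(hx c).1]) hba.le
      have hst : (b - x c) / (b - a) + (x c - a) / (b - a) = 1 := by
        field_simp
        ring
      have := convexOn_exp.2 (Set.mem_univ (l * a)) (Set.mem_univ (l * b)) hs ht hst
      simp only [smul_eq_mul] at this
      have harg : (b - x c) / (b - a) * (l * a) + (x c - a) / (b - a) * (l * b) = l * x c := by
        field_simp
        ring
      rw [harg] at this
      exact this
    have e1 : ∑ c, w c * (b - x c) = b - μ := by
      simp only [mul_sub]
      rw [Finset.sum_sub_distrib, ← Finset.sum_mul, hw1, one_mul, hμ]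
    have e2 : ∑ c, w c * (x c - a) = μ - a := by
      simp only [mul_sub]
      rw [Finset.sum_sub_distrib, ← Finset.sum_mul, hw1, one_mul, hμ]
    have step1 : ∑ c, w c * Real.exp (l * x c) ≤
        Real.exp (l * a) * ((1 - p) + p * Real.exp (l * (b - a))) := by
      calc ∑ c, w c * Real.exp (l * x c)
          ≤ ∑ c, w c * ((b - x c) / (b - a) * Real.exp (l * a)
              + (x c - a) / (b - a) * Real.exp (l * b)) :=
            Finset.sum_le_sum (fun c _ => mul_le_mul_of_nonneg_left (pointwise c) (hw c))
        _ = ∑ c, ((w c * (b - x c)) * (Real.exp (l * a) / (b - a))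
              + (w c * (x c - a)) * (Real.exp (l * b) / (b - a))) := by
            apply Finset.sum_congr rfl
            intro c _
            field_simp
        _ = (b - μ) * (Real.exp (l * a) / (b - a))
              + (μ - a) * (Real.exp (l * b) / (b - a)) := by
            rw [Finset.sum_add_distrib, ← Finset.sum_mul, ← Finset.sum_mul, e1, e2]
        _ = Real.exp (l * a) * ((1 - p) + p * Real.exp (l * (b - a))) := by
            have hexp : Real.exp (l * b) = Real.exp (l * a) * Real.exp (l * (b - a)) := by
              rw [← Real.exp_add]; ring_nf
            rw [hexp, hp]
            field_simp
            ring
    have step2 := key_exp_bound hp0 hp1 (l * (b - a))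
    have step3 : Real.exp (l * a) * ((1 - p) + p * Real.exp (l * (b - a))) ≤
        Real.exp (l * a) * Real.exp (p * (l * (b - a)) + (l * (b - a)) ^ 2 / 8) :=
      mul_le_mul_of_nonneg_left step2 (Real.exp_pos _).le
    have harg2 : l * a + (p * (l * (b - a)) + (l * (b - a)) ^ 2 / 8)
        = l * μ + l ^ 2 * (b - a) ^ 2 / 8 := by
      rw [hp]; field_simp; ring
    calc ∑ c, w c * Real.exp (l * x c)
        ≤ Real.exp (l * a) * Real.exp (p * (l * (b - a)) + (l * (b - a)) ^ 2 / 8) :=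
          le_trans step1 step3
      _ = Real.exp (l * μ + l ^ 2 * (b - a) ^ 2 / 8) := by rw [← Real.exp_add, harg2]

/-- An `ε`-bounded-range mechanism satisfies `(ε²/8)`-zCDP: if all log-likelihood
ratios `log(P(c)/Q(c))` lie in `[t, t + ε]`, then for every `α ∈ (1,∞)` the Rényi
divergence `(α−1)⁻¹ · log Σ Q(c)·(P(c)/Q(c))^α` is at most `α·ε²/8`. -/
theorem bounded_range_zcdp {C : Type*} [Fintype C] [Nonempty C]
    (P Q : C → ℝ) (hP : ∀ c, 0 < P c) (hQ : ∀ c, 0 < Q c)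
    (hPsum : ∑ c, P c = 1) (hQsum : ∑ c, Q c = 1)
    (ε t : ℝ) (hε : 0 ≤ ε)
    (hbr : ∀ c, t ≤ Real.log (P c / Q c) ∧ Real.log (P c / Q c) ≤ t + ε) :
    ∀ α : ℝ, 1 < α →
      (1 / (α - 1)) * Real.log (∑ c, Q c * (P c / Q c) ^ α) ≤ α * ε ^ 2 / 8 := by
  intro α hα
  set x : C → ℝ := fun c => Real.log (P c / Q c) with hx
  have hratio : ∀ c, Real.exp (x c) = P c / Q c := fun c =>
    Real.exp_log (div_pos (hP c) (hQ c))
  have hPQ : ∀ c, P c = Q c * Real.exp (x c) := by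
    intro c
    rw [hratio c, mul_comm, div_mul_cancel₀ _ (hQ c).ne']
  have hxmem : ∀ c, x c ∈ Set.Icc t (t + ε) := fun c => ⟨(hbr c).1, (hbr c).2⟩
  set KL := ∑ c, P c * x c with hKL
  -- Step A : KL ≤ ε² / 8 via Hoeffding with weights P and values -x, l = 1
  have stepA : KL ≤ ε ^ 2 / 8 := by
    have h1 : ∑ c, P c * Real.exp ((-1) * x c) = 1 := by
      have heach : ∀ c, P c * Real.exp ((-1) * x c) = Q c := by
        intro c
        rw [hPQ c, mul_assoc, ← Real.exp_add]
        norm_num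
      rw [Finset.sum_congr rfl (fun c _ => heach c), hQsum]
    have h2 := finite_hoeffding P x (fun c => (hP c).le) hPsum t (t + ε) (-1) hxmem
    rw [h1] at h2
    have h3 : (0:ℝ) ≤ (-1 : ℝ) * KL + (-1:ℝ) ^ 2 * (t + ε - t) ^ 2 / 8 := by
      have := Real.exp_le_exp.mpr (le_refl ((-1:ℝ) * KL + (-1:ℝ)^2 * (t + ε - t)^2/8))
      by_contra hcon
      push_neg at hcon
      have := Real.exp_lt_one_iff.mpr hcon
      linarith [h2]
    nlinarith [h3]
  -- Step B : the MGF bound with weights P and l = α - 1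
  have hrw : ∑ c, Q c * (P c / Q c) ^ α = ∑ c, P c * Real.exp ((α - 1) * x c) := by
    apply Finset.sum_congr rfl
    intro c _
    rw [Real.rpow_def_of_pos (div_pos (hP c) (hQ c))]
    have hlogx : Real.log (P c / Q c) = x c := rfl
    rw [hlogx, hPQ c, mul_assoc, ← Real.exp_add]
    congr 1
    rw [Real.exp_eq_exp]
    ring
  have stepB := finite_hoeffding P x (fun c => (hP c).le) hPsum t (t + ε) (α - 1) hxmem
  rw [← hKL] at stepB
  have hSpos : 0 < ∑ c, Q c * (P c / Q c) ^ α := by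
    apply Finset.sum_pos
    · intro c _
      exact mul_pos (hQ c) (Real.rpow_pos_of_pos (div_pos (hP c) (hQ c)) α)
    · exact Finset.univ_nonempty
  have hlog : Real.log (∑ c, Q c * (P c / Q c) ^ α)
      ≤ (α - 1) * KL + (α - 1) ^ 2 * (t + ε - t) ^ 2 / 8 := by
    rw [hrw]
    calc Real.log (∑ c, P c * Real.exp ((α - 1) * x c))
        ≤ Real.log (Real.exp ((α - 1) * KL + (α - 1) ^ 2 * (t + ε - t) ^ 2 / 8)) := by
          apply Real.log_le_log _ stepB
          rw [← hrw]; exact hSpos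
      _ = (α - 1) * KL + (α - 1) ^ 2 * (t + ε - t) ^ 2 / 8 := Real.log_exp _
  have hα1 : (0:ℝ) < α - 1 := by linarith
  rw [one_div, ← div_eq_inv_mul, div_le_iff₀ hα1]
  have hb : (α - 1) * KL + (α - 1) ^ 2 * (t + ε - t) ^ 2 / 8 ≤ α * ε ^ 2 / 8 * (α - 1) := by
    have : (t + ε - t) = ε := by ring
    rw [this]
    nlinarith [mul_le_mul_of_nonneg_left stepA hα1.le]
  linarith [hlog, hb]
end

section
/- Let P and Q be probability measures on a measurable space, mutually absolutely continuous, and let ε ≥ 0. Suppose the Radon–Nikodym derivative satisfies e^{−ε} ≤ dP/dQ ≤ e^{ε} Q-almost everywhere (equivalently, P(S) ≤ e^ε·Q(S) and Q(S) ≤ e^ε·P(S) for all measurable S). Then for every α ∈ (1,∞), the Rényi divergence satisfies D_α(P‖Q) ≤ α·ε²/2. Hence every ε-DP mechanism satisfies (ε²/2)-zCDP. -/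
open MeasureTheory Real

/-- `sinh t ≤ t * cosh t` for `t ≥ 0`. -/
lemma sinh_le_mul_cosh {t : ℝ} (ht : 0 ≤ t) : Real.sinh t ≤ t * Real.cosh t := by
  have hmono : MonotoneOn (fun s : ℝ => s * Real.cosh s - Real.sinh s) (Set.Ici 0) := by
    have hder : ∀ s : ℝ, HasDerivAt (fun s : ℝ => s * Real.cosh s - Real.sinh s)
        (s * Real.sinh s) s := by
      intro s
      have h := ((hasDerivAt_id s).mul (Real.hasDerivAt_cosh s)).sub (Real.hasDerivAt_sinh s)
      refine h.congr_deriv ?_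
      simp only [id_eq, one_mul]
      ring
    apply monotoneOn_of_deriv_nonneg (convex_Ici 0)
    · exact (Continuous.sub (continuous_id.mul Real.continuous_cosh) Real.continuous_sinh).continuousOn
    · intro s _
      exact (hder s).differentiableAt.differentiableWithinAt
    · intro s hs
      rw [interior_Ici] at hs
      rw [(hder s).deriv]
      have hs0 : 0 < s := hs
      have : 0 ≤ Real.sinh s := Real.sinh_nonneg_iff.mpr hs0.le
      positivity
  have := hmono (Set.self_mem_Ici) (Set.mem_Ici.mpr ht) ht
  simp only [Real.cosh_zero, Real.sinh_zero, zero_mul, sub_zero, mul_one] at this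
  linarith

/-- `cosh x ≤ cosh y * exp ((x² − y²)/2)` for `0 ≤ y ≤ x`. -/
lemma cosh_le_cosh_mul_exp {x y : ℝ} (hy : 0 ≤ y) (hxy : y ≤ x) :
    Real.cosh x ≤ Real.cosh y * Real.exp ((x ^ 2 - y ^ 2) / 2) := by
  have hx : (0 : ℝ) ≤ x := le_trans hy hxy
  have hder : ∀ s : ℝ, HasDerivAt (fun s : ℝ => Real.cosh s * Real.exp (-(s ^ 2) / 2))
      ((Real.sinh s - s * Real.cosh s) * Real.exp (-(s ^ 2) / 2)) s := by
    intro s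
    have h1 : HasDerivAt (fun s : ℝ => -(s ^ 2) / 2) (-(2 * s ^ 1) / 2) s :=
      ((hasDerivAt_pow 2 s).neg.div_const 2).congr_deriv (by norm_num)
    have h2 := h1.exp
    have h := (Real.hasDerivAt_cosh s).mul h2
    refine h.congr_deriv ?_; ring
  have hanti : AntitoneOn (fun s : ℝ => Real.cosh s * Real.exp (-(s ^ 2) / 2)) (Set.Ici 0) := by
    apply antitoneOn_of_deriv_nonpos (convex_Ici 0)
    · exact (Real.continuous_cosh.mul (Real.continuous_exp.comp
        (by continuity))).continuousOn
    · intro s _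
      exact (hder s).differentiableAt.differentiableWithinAt
    · intro s hs
      rw [interior_Ici] at hs
      rw [(hder s).deriv]
      have hs0 : (0:ℝ) < s := hs
      have h1 := sinh_le_mul_cosh hs0.le
      have h2 := (Real.exp_pos (-(s ^ 2) / 2)).le
      nlinarith
  have h := hanti (Set.mem_Ici.mpr hy) (Set.mem_Ici.mpr hx) hxy
  have h2 : Real.cosh x * Real.exp (-(x ^ 2) / 2) * Real.exp (x ^ 2 / 2) ≤
      Real.cosh y * Real.exp (-(y ^ 2) / 2) * Real.exp (x ^ 2 / 2) :=
    mul_le_mul_of_nonneg_right h (Real.exp_pos _).le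
  rw [mul_assoc, mul_assoc, ← Real.exp_add, ← Real.exp_add] at h2
  have e1 : -(x ^ 2) / 2 + x ^ 2 / 2 = 0 := by ring
  have e2 : -(y ^ 2) / 2 + x ^ 2 / 2 = (x ^ 2 - y ^ 2) / 2 := by ring
  rw [e1, e2, Real.exp_zero, mul_one] at h2
  exact h2

/-- The key scalar inequality. -/
lemma scalar_key (ε α : ℝ) (hε : 0 ≤ ε) (hα : 1 < α) :
    Real.exp (-(ε * α)) * (Real.exp ε - 1) + Real.exp (ε * α) * (1 - Real.exp (-ε)) ≤
      (Real.exp ε - Real.exp (-ε)) * Real.exp (α * (α - 1) * ε ^ 2 / 2) := by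
  set y : ℝ := ε / 2 with hy_def
  set x : ℝ := (2 * α - 1) * ε / 2 with hx_def
  have hy : 0 ≤ y := by positivity
  have hxy : y ≤ x := by
    rw [hy_def, hx_def]
    nlinarith
  set u : ℝ := Real.exp y with hu_def
  set v : ℝ := Real.exp x with hv_def
  have hu0 : 0 < u := Real.exp_pos _
  have hv0 : 0 < v := Real.exp_pos _
  have hu1 : 1 ≤ u := Real.one_le_exp hy
  have huv : u ≤ v := Real.exp_le_exp.mpr hxy
  set C : ℝ := Real.exp ((x ^ 2 - y ^ 2) / 2) with hC_def
  have hC0 : 0 < C := Real.exp_pos _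
  -- cosh bound
  have hcosh : v + v⁻¹ ≤ (u + u⁻¹) * C := by
    have h := cosh_le_cosh_mul_exp hy hxy
    rw [Real.cosh_eq, Real.cosh_eq, Real.exp_neg, Real.exp_neg] at h
    rw [← hu_def, ← hv_def, ← hC_def] at h
    linarith [mul_le_mul_of_nonneg_right h (by norm_num : (0:ℝ) ≤ 2)]
  -- rewriting the goal in terms of u, v, C
  have he1 : Real.exp ε = u * u := by
    rw [hu_def, ← Real.exp_add]; congr 1; rw [hy_def]; ring
  have he2 : Real.exp (-ε) = u⁻¹ * u⁻¹ := by
    rw [hu_def, ← Real.exp_neg, ← Real.exp_add]; congr 1; rw [hy_def]; ring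
  have he3 : Real.exp (ε * α) = v * u := by
    rw [hu_def, hv_def, ← Real.exp_add]; congr 1; rw [hy_def, hx_def]; ring
  have he4 : Real.exp (-(ε * α)) = v⁻¹ * u⁻¹ := by
    rw [hu_def, hv_def, ← Real.exp_neg, ← Real.exp_neg, ← Real.exp_add]
    congr 1; rw [hy_def, hx_def]; ring
  have he5 : Real.exp (α * (α - 1) * ε ^ 2 / 2) = C := by
    rw [hC_def]; congr 1; rw [hy_def, hx_def]; ring
  rw [he1, he2, he3, he4, he5]
  have hune : u ≠ 0 := hu0.ne'
  have hvne : v ≠ 0 := hv0.ne'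
  have h4 : 0 ≤ u - u⁻¹ := by
    have : u⁻¹ ≤ 1 := by
      rw [inv_le_one_iff₀]; right; exact hu1
    linarith
  have h5 : (u - u⁻¹) * (v + v⁻¹) ≤ (u - u⁻¹) * ((u + u⁻¹) * C) :=
    mul_le_mul_of_nonneg_left hcosh h4
  calc v⁻¹ * u⁻¹ * (u * u - 1) + v * u * (1 - u⁻¹ * u⁻¹)
      = (u - u⁻¹) * (v + v⁻¹) := by field_simp; ring
    _ ≤ (u - u⁻¹) * ((u + u⁻¹) * C) := h5
    _ = (u * u - u⁻¹ * u⁻¹) * C := by field_simp; ring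

/-- Every `ε`-DP mechanism satisfies `(ε²/2)`-zCDP: if `e^{−ε} ≤ dP/dQ ≤ e^{ε}`
`Q`-a.e., then `D_α(P‖Q) ≤ α·ε²/2` for every `α ∈ (1,∞)`. -/
theorem pure_dp_to_zcdp {Ω : Type*} [MeasurableSpace Ω]
    (P Q : Measure Ω) [IsProbabilityMeasure P] [IsProbabilityMeasure Q]
    (hPQ : P ≪ Q) (hQP : Q ≪ P) (ε : ℝ) (hε : 0 ≤ ε)
    (hbound : ∀ᵐ x ∂Q, Real.exp (-ε) ≤ ((P.rnDeriv Q) x).toReal ∧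
      ((P.rnDeriv Q) x).toReal ≤ Real.exp ε) :
    ∀ α : ℝ, 1 < α → renyiDiv α P Q ≤ α * ε ^ 2 / 2 := by
  intro α hα
  set r : Ω → ℝ := fun x => ((P.rnDeriv Q) x).toReal with hr_def
  have hmeas : Measurable r := (Measure.measurable_rnDeriv P Q).ennreal_toReal
  have hr_nonneg : ∀ x, 0 ≤ r x := fun x => ENNReal.toReal_nonneg
  have hint_r : Integrable r Q := Measure.integrable_toReal_rnDeriv
  have hone : ∫ x, r x ∂Q = 1 := by
    rw [hr_def, Measure.integral_toReal_rnDeriv hPQ]; simp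
  have hα1 : (0:ℝ) < α - 1 := by linarith
  rcases eq_or_lt_of_le hε with hε0 | hεpos
  · -- ε = 0 case
    have hre : ∀ᵐ x ∂Q, r x = 1 := by
      filter_upwards [hbound] with x hx
      rw [← hε0] at hx
      simp only [neg_zero, Real.exp_zero] at hx
      linarith [hx.1, hx.2]
    have : ∫ x, r x ^ α ∂Q = 1 := by
      have heq : (fun x => r x ^ α) =ᵐ[Q] (fun _ => (1:ℝ)) := by
        filter_upwards [hre] with x hx
        rw [hx, Real.one_rpow]
      rw [integral_congr_ae heq, integral_const]
      simp
    show (α - 1)⁻¹ * Real.log (∫ x, r x ^ α ∂Q) ≤ α * ε ^ 2 / 2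
    rw [this, Real.log_one, mul_zero, ← hε0]
    positivity
  · -- ε > 0 case
    set a : ℝ := Real.exp (-ε) with ha_def
    set b : ℝ := Real.exp ε with hb_def
    have ha0 : 0 < a := Real.exp_pos _
    have hb0 : 0 < b := Real.exp_pos _
    have hab : a < b := Real.exp_lt_exp.mpr (by linarith)
    have hd : 0 < b - a := sub_pos.mpr hab
    -- pointwise convexity bound
    have hptwise : ∀ᵐ x ∂Q, r x ^ α ≤
        ((b - r x) * a ^ α + (r x - a) * b ^ α) / (b - a) := by
      filter_upwards [hbound] with x hx
      obtain ⟨h1, h2⟩ := hx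
      set w1 : ℝ := (b - r x) / (b - a) with hw1
      set w2 : ℝ := (r x - a) / (b - a) with hw2
      have hw1n : 0 ≤ w1 := div_nonneg (by linarith) hd.le
      have hw2n : 0 ≤ w2 := div_nonneg (by linarith) hd.le
      have hsum : w1 + w2 = 1 := by rw [hw1, hw2]; field_simp; ring
      have hcomb : w1 • a + w2 • b = r x := by
        simp only [smul_eq_mul, hw1, hw2]; field_simp; ring
      have key := (convexOn_rpow hα.le).2 (Set.mem_Ici.mpr ha0.le)
        (Set.mem_Ici.mpr hb0.le) hw1n hw2n hsum
      rw [hcomb] at key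
      simp only [smul_eq_mul] at key
      calc r x ^ α ≤ w1 * a ^ α + w2 * b ^ α := key
        _ = ((b - r x) * a ^ α + (r x - a) * b ^ α) / (b - a) := by
            rw [hw1, hw2]
            field_simp
    -- integrability
    have hmeas_f : Measurable (fun x => r x ^ α) :=
      (Real.continuous_rpow_const (by linarith : (0:ℝ) ≤ α)).measurable.comp hmeas
    have hint_f : Integrable (fun x => r x ^ α) Q := by
      apply Integrable.mono' (integrable_const (b ^ α)) hmeas_f.aestronglyMeasurable
      filter_upwards [hbound] with x hx
      rw [Real.norm_eq_abs, abs_of_nonneg (Real.rpow_nonneg (hr_nonneg x) α)]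
      exact Real.rpow_le_rpow (hr_nonneg x) hx.2 (by linarith)
    have hi0 : Integrable (fun x => b - r x) Q := (integrable_const b).sub hint_r
    have hi0' : Integrable (fun x => r x - a) Q := hint_r.sub (integrable_const a)
    have hi1 : Integrable (fun x => (b - r x) * a ^ α) Q := hi0.mul_const _
    have hi2 : Integrable (fun x => (r x - a) * b ^ α) Q := hi0'.mul_const _
    have hint_g : Integrable (fun x => ((b - r x) * a ^ α + (r x - a) * b ^ α) / (b - a)) Q :=
      (hi1.add hi2).div_const _
    have hs1 : ∫ x, (b - r x) ∂Q = b - 1 := by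
      rw [integral_sub (integrable_const b) hint_r, hone, integral_const]; simp
    have hs2 : ∫ x, (r x - a) ∂Q = 1 - a := by
      rw [integral_sub hint_r (integrable_const a), hone, integral_const]; simp
    -- compute the integral of the bound
    have I2 : ∫ x, ((b - r x) * a ^ α + (r x - a) * b ^ α) / (b - a) ∂Q =
        ((b - 1) * a ^ α + (1 - a) * b ^ α) / (b - a) := by
      rw [integral_div]
      congr 1
      rw [integral_add hi1 hi2, integral_mul_const, integral_mul_const, hs1, hs2]
    have I1 : ∫ x, r x ^ α ∂Q ≤ ((b - 1) * a ^ α + (1 - a) * b ^ α) / (b - a) := by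
      rw [← I2]; exact integral_mono_ae hint_f hint_g hptwise
    -- scalar bound
    have haα : a ^ α = Real.exp (-(ε * α)) := by
      rw [ha_def, ← Real.exp_mul]
      congr 1
      ring
    have hbα : b ^ α = Real.exp (ε * α) := by
      rw [hb_def, ← Real.exp_mul]
    have hsc := scalar_key ε α hε hα
    have I3 : ((b - 1) * a ^ α + (1 - a) * b ^ α) / (b - a) ≤
        Real.exp (α * (α - 1) * ε ^ 2 / 2) := by
      rw [div_le_iff₀ hd, haα, hbα]
      calc (b - 1) * Real.exp (-(ε * α)) + (1 - a) * Real.exp (ε * α)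
          = Real.exp (-(ε * α)) * (Real.exp ε - 1)
            + Real.exp (ε * α) * (1 - Real.exp (-ε)) := by rw [ha_def, hb_def]; ring
        _ ≤ (Real.exp ε - Real.exp (-ε)) * Real.exp (α * (α - 1) * ε ^ 2 / 2) := hsc
        _ = Real.exp (α * (α - 1) * ε ^ 2 / 2) * (b - a) := by rw [ha_def, hb_def]; ring
    have Ifinal : ∫ x, r x ^ α ∂Q ≤ Real.exp (α * (α - 1) * ε ^ 2 / 2) := le_trans I1 I3
    -- positivity of the integral
    have hpos : 0 < ∫ x, r x ^ α ∂Q := by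
      have hlb : ∀ᵐ x ∂Q, a ^ α ≤ r x ^ α := by
        filter_upwards [hbound] with x hx
        exact Real.rpow_le_rpow ha0.le hx.1 (by linarith)
      have := integral_mono_ae (integrable_const (a ^ α)) hint_f hlb
      rw [integral_const] at this
      simp only [probReal_univ, one_smul] at this
      exact lt_of_lt_of_le (Real.rpow_pos_of_pos ha0 α) this
    -- conclude
    have hlog : Real.log (∫ x, r x ^ α ∂Q) ≤ α * (α - 1) * ε ^ 2 / 2 := by
      calc Real.log (∫ x, r x ^ α ∂Q) ≤ Real.log (Real.exp (α * (α - 1) * ε ^ 2 / 2)) :=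
            Real.log_le_log hpos Ifinal
        _ = α * (α - 1) * ε ^ 2 / 2 := Real.log_exp _
    show (α - 1)⁻¹ * Real.log (∫ x, r x ^ α ∂Q) ≤ α * ε ^ 2 / 2
    calc (α - 1)⁻¹ * Real.log (∫ x, r x ^ α ∂Q)
        ≤ (α - 1)⁻¹ * (α * (α - 1) * ε ^ 2 / 2) :=
          mul_le_mul_of_nonneg_left hlog (inv_nonneg.mpr hα1.le)
      _ = α * ε ^ 2 / 2 := by field_simp
end
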